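/- arXiv:2505.13984 — 7 statements merged into one kernel-verified Lean document; each statement's English description precedes it below -/
import Mathlib

section
/- Let A be a unital *-algebra with elements F_{abc} ∈ A for a, b, c ∈ {1,…,n} satisfying F_{abc} = −F_{acb}. Then there exist matrices R₁,…,Rₙ ∈ Matₙ(A) with (R_a)_{bc}* = (R_a)_{cb} (hermitian) such that (R_a)_{cb} − (R_b)_{ca} = F_{cab} for all a, b, c, if and only if F_{abc} + F_{bca} + F_{cab} + (F_{abc} + F_{bca} + F_{cab})* = 0 for all a, b, c ∈ {1,…,n}. -/
/-- Proposition: solvability of `(R_a)_{cb} − (R_b)_{ca} = F_{cab}`: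
given `F_{abc} ∈ A` with `F_{abc} = −F_{acb}`, there exist hermitian matrices
`R₁,…,Rₙ ∈ Matₙ(A)` (i.e. `(R_a)_{bc}* = (R_a)_{cb}`) with
`(R_a)_{cb} − (R_b)_{ca} = F_{cab}` for all `a,b,c` if and only if
`F_{abc} + F_{bca} + F_{cab} + (F_{abc} + F_{bca} + F_{cab})* = 0` for all `a,b,c`. -/
theorem stmt5 {A : Type*} [Ring A] [StarRing A] [Algebra ℂ A] {n : ℕ}
    (F : Fin n → Fin n → Fin n → A)
    (hF : ∀ a b c, F a b c = -F a c b) :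
    (∃ R : Fin n → Matrix (Fin n) (Fin n) A,
        (∀ a b c, star (R a b c) = R a c b) ∧
        (∀ a b c, R a c b - R b c a = F c a b)) ↔
    (∀ a b c, F a b c + F b c a + F c a b +
        star (F a b c + F b c a + F c a b) = 0) := by
  constructor
  · rintro ⟨R, h1, h2⟩ a b c
    rw [← h2 b c a, ← h2 c a b, ← h2 a b c]
    simp only [star_sub, star_add, h1]
    abel
  · intro h
    set u : A := algebraMap ℂ A (6⁻¹) with hu
    have h6 : u * (6 : A) = 1 := by
      rw [show ((6:A) = algebraMap ℂ A 6) from (map_ofNat (algebraMap ℂ A) 6).symm, ← map_mul]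
      norm_num
    have hcomm : ∀ x : A, x * u = u * x := fun x => (Algebra.commutes _ x).symm
    have h6' : (6:A) * u = 1 := by rw [hcomm]; exact h6
    have hsu : star u = u := by
      have hst : star u * (6:A) = 1 := by
        have := congrArg star h6'
        rwa [star_mul, star_ofNat, star_one] at this
      calc star u = star u * ((6:A) * u) := by rw [h6', mul_one]
        _ = (star u * (6:A)) * u := (mul_assoc _ _ _).symm
        _ = u := by rw [hst, one_mul]
    refine ⟨fun a => Matrix.of fun c b =>
      u * (3 • F c a b + (F a c b - F b a c) - 2 • (star (F a c b) - star (F b a c))), ?_, ?_⟩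
    · intro a b c
      simp only [Matrix.of_apply]
      rw [star_mul, hsu, hcomm]
      congr 1
      simp only [star_sub, star_add, star_nsmul, star_star]
      have h' := h a b c
      simp only [star_add] at h'
      have h'' : -(F a b c + F b c a + F c a b +
          (star (F a b c) + star (F b c a) + star (F c a b))) = 0 := by
        rw [h', neg_zero]
      rw [← sub_eq_zero, ← h'']
      rw [hF a c b, hF b a c]
      simp only [star_neg]
      abel
    · intro a b c
      simp only [Matrix.of_apply]
      rw [← mul_sub]
      have key : (3 • F c a b + (F a c b - F b a c) - 2 • (star (F a c b) - star (F b a c)))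
           - (3 • F c b a + (F b c a - F a b c) - 2 • (star (F b c a) - star (F a b c)))
           = 6 • F c a b := by
        rw [hF a c b, hF b a c, hF c b a]
        simp only [star_neg]
        abel
      rw [key, nsmul_eq_mul, ← mul_assoc, show ((6:ℕ):A) = (6:A) from by norm_num, h6, one_mul]
end

section
/- Let A be a unital *-algebra and F_{abc} ∈ A (a,b,c ∈ {1,…,n}, n ≥ 3) with F_{abc} = −F_{acb} and F_{abc} + F_{bca} + F_{cab} + (F_{abc} + F_{bca} + F_{cab})* = 0. Then for pairwise distinct a, b, c, the assignment (R_a)_{bc} = ½(F_{abc} − F_{bca} + F_{cab}*), (R_b)_{ca} = ½(F_{abc}* − F_{bca}* − F_{cab}), (R_c)_{ab} = −½(F_{abc} + F_{bca} + F_{cab}*) satisfies the three equations (R_a)_{cb} − (R_b)_{ca} = F_{cab}, (R_b)_{ac} − (R_c)_{ab} = F_{abc}, (R_c)_{ba} − (R_a)_{bc} = F_{bca}, where (R_x)_{cb} is interpreted as (R_x)_{bc}*. -/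
lemma star_half_smul {A : Type*} [Ring A] [StarRing A] [Algebra ℂ A] (v : A) :
    star ((2 : ℂ)⁻¹ • v) = (2 : ℂ)⁻¹ • star v := by
  have h2 : ((2:ℂ)) • star ((2:ℂ)⁻¹ • v) = star v := by
    rw [two_smul, ← star_add, ← two_smul ℂ, smul_smul]
    norm_num
  calc star ((2:ℂ)⁻¹ • v) = (2:ℂ)⁻¹ • ((2:ℂ) • star ((2:ℂ)⁻¹ • v)) :=
        (inv_smul_smul₀ two_ne_zero _).symm
    _ = (2:ℂ)⁻¹ • star v := by rw [h2]

/-- for `n ≥ 3` and `F` with `F_{abc} = −F_{acb}` and the cyclic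
antihermiticity condition, for pairwise distinct `a, b, c` the explicit entries
`(R_a)_{bc} = ½(F_{abc} − F_{bca} + F_{cab}*)`,
`(R_b)_{ca} = ½(F_{abc}* − F_{bca}* − F_{cab})`,
`(R_c)_{ab} = −½(F_{abc} + F_{bca} + F_{cab}*)`
satisfy the three equations
`(R_a)_{cb} − (R_b)_{ca} = F_{cab}`, `(R_b)_{ac} − (R_c)_{ab} = F_{abc}`,
`(R_c)_{ba} − (R_a)_{bc} = F_{bca}`, where `(R_x)_{cb}` is interpreted as
`(R_x)_{bc}*` (hermiticity convention). -/
theorem stmt6 {A : Type*} [Ring A] [StarRing A] [Algebra ℂ A] {n : ℕ}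
    (hn : 3 ≤ n)
    (F : Fin n → Fin n → Fin n → A)
    (hF : ∀ a b c, F a b c = -F a c b)
    (hF2 : ∀ a b c, F a b c + F b c a + F c a b +
        star (F a b c + F b c a + F c a b) = 0)
    (a b c : Fin n) (hab : a ≠ b) (hbc : b ≠ c) (hac : a ≠ c) :
    (star ((2 : ℂ)⁻¹ • (F a b c - F b c a + star (F c a b)))
        - (2 : ℂ)⁻¹ • (star (F a b c) - star (F b c a) - F c a b) = F c a b) ∧
    (star ((2 : ℂ)⁻¹ • (star (F a b c) - star (F b c a) - F c a b))
        - (-(2 : ℂ)⁻¹ • (F a b c + F b c a + star (F c a b))) = F a b c) ∧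
    (star (-(2 : ℂ)⁻¹ • (F a b c + F b c a + star (F c a b)))
        - (2 : ℂ)⁻¹ • (F a b c - F b c a + star (F c a b)) = F b c a) := by
  have h0 := hF2 a b c
  rw [star_add, star_add] at h0
  have h : star (F a b c) = -(F a b c + F b c a + F c a b)
      - star (F b c a) - star (F c a b) := by
    have h1 := eq_neg_of_add_eq_zero_right h0
    rw [eq_sub_iff_add_eq, eq_sub_iff_add_eq, ← h1]
    abel
  refine ⟨?_, ?_, ?_⟩ <;>
    simp only [neg_smul, star_neg, star_half_smul, star_sub, star_add, star_star, h] <;>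
    module
end

section
/- Let M be a finitely generated projective left A-module with generators θ¹,…,θᴺ, dual basis φ₁,…,φ_N, and invertible left hermitian form h. With hⁱʲ = h(θⁱ, θʲ) and h_{ij} = h⁻¹(φ_i, φ_j), the map p_h : Aᴺ → Aᴺ defined on the standard basis by p_h(eⁱ) = Σ_{j,k} hⁱʲ h_{jk} eᵏ coincides with the projection p = s ∘ π, where π(eⁱ) = θⁱ and s(m) = Σᵢ φᵢ(m) eⁱ; in particular p_h² = p_h. -/
/-- with generators `θⁱ`, dual basis `φᵢ` and invertible hermitian
form `h` on the f.g. projective module `M`, the map `p_h : Aᴺ → Aᴺ`,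
`p_h(eⁱ) = Σⱼₖ hⁱʲ h_{jk} eᵏ` (extended `A`-linearly), coincides with the
projection `p = s ∘ π` where `π(eⁱ) = θⁱ` and `s(m) = Σᵢ φᵢ(m)eⁱ`; in particular
`p_h² = p_h`. -/
theorem stmt12 {A M : Type*} [Ring A] [StarRing A] [Algebra ℂ A]
    [AddCommGroup M] [Module A M] {N : ℕ}
    (θ : Fin N → M) (φ : Fin N → (M → A))
    (hφadd : ∀ i (m n : M), φ i (m + n) = φ i m + φ i n)
    (hφlin : ∀ i (a : A) (m : M), φ i (a • m) = a * φ i m)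
    (hdb₁ : ∀ m : M, ∑ i, φ i m • θ i = m)
    (hdb₂ : ∀ f : M → A, (∀ m n, f (m + n) = f m + f n) → (∀ (a : A) m, f (a • m) = a * f m) →
        ∀ m, ∑ i, φ i m * f (θ i) = f m)
    (h : M → M → A)
    (hadd₁ : ∀ m₁ m₂ n : M, h (m₁ + m₂) n = h m₁ n + h m₂ n)
    (hadd₂ : ∀ m n₁ n₂ : M, h m (n₁ + n₂) = h m n₁ + h m n₂)
    (hlin : ∀ (a : A) (m n : M), h (a • m) n = a * h m n)
    (hsym : ∀ m n : M, star (h m n) = h n m)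
    (hinv : (M → A) → M)
    (hleft : ∀ m : M, hinv (fun n => h n m) = m)
    (hright : ∀ i, (fun n => h n (hinv (φ i))) = φ i)
    -- `π : Aᴺ → M`, `s : M → Aᴺ`, `p = s ∘ π`, and `p_h` from the hermitian form:
    (π : (Fin N → A) → M) (hπ : ∀ u, π u = ∑ i, u i • θ i)
    (s : M → (Fin N → A)) (hs : ∀ m, s m = fun i => φ i m)
    (ph : (Fin N → A) → (Fin N → A))
    (hph : ∀ u k, ph u k = ∑ i, u i * ∑ j, h (θ i) (θ j) * h (hinv (φ j)) (hinv (φ k))) :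
    (∀ u, ph u = s (π u)) ∧ (∀ u, ph (ph u) = ph u) := by
  have hφzero : ∀ i, φ i (0 : M) = 0 := by
    intro i
    have h0 := hφadd i 0 0
    simp only [add_zero] at h0
    exact (add_left_cancel (a := φ i 0) (by rw [add_zero, ← h0])).symm
  have hzero₂ : ∀ n : M, h n 0 = 0 := by
    intro n
    have h0 := hadd₂ n 0 0
    simp only [add_zero] at h0
    exact (add_left_cancel (a := h n 0) (by rw [add_zero, ← h0])).symm
  -- φ k commutes with finite sums
  have hφsum : ∀ k (t : Finset (Fin N)) (g : Fin N → M),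
      φ k (∑ i ∈ t, g i) = ∑ i ∈ t, φ k (g i) := by
    intro k t g
    induction t using Finset.induction with
    | empty => simpa using hφzero k
    | insert _ _ hx ih => rw [Finset.sum_insert hx, Finset.sum_insert hx, hφadd, ih]
  -- h n · commutes with finite sums
  have hsum₂ : ∀ (n : M) (t : Finset (Fin N)) (g : Fin N → M),
      h n (∑ i ∈ t, g i) = ∑ i ∈ t, h n (g i) := by
    intro n t g
    induction t using Finset.induction with
    | empty => simpa using hzero₂ n
    | insert _ _ hx ih => rw [Finset.sum_insert hx, Finset.sum_insert hx, hadd₂, ih]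
  -- conjugate linearity in second argument
  have hlin₂ : ∀ (a : A) (m n : M), h n (a • m) = h n m * star a := by
    intro a m n
    calc h n (a • m) = star (star (h n (a • m))) := (star_star _).symm
      _ = star (h (a • m) n) := by rw [hsym]
      _ = star (a * h m n) := by rw [hlin]
      _ = star (h m n) * star a := by rw [star_mul]
      _ = h n m * star a := by rw [hsym]
  -- key identity
  have key : ∀ i k, (∑ j, h (θ i) (θ j) * h (hinv (φ j)) (hinv (φ k))) = φ k (θ i) := by
    intro i k
    set m := hinv (φ k) with hm
    have h1 : ∀ n, h n m = φ k n := fun n => congrFun (hright k) n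
    have h2 : ∀ j, h (hinv (φ j)) m = star (φ j m) := by
      intro j
      have := congrFun (hright j) m
      rw [← this, ← hsym]
    have h3 : h (θ i) m = ∑ j, h (θ i) (θ j) * star (φ j m) := by
      conv_lhs => rw [← hdb₁ m]
      rw [hsum₂]
      exact Finset.sum_congr rfl fun j _ => hlin₂ _ _ _
    calc (∑ j, h (θ i) (θ j) * h (hinv (φ j)) (hinv (φ k)))
        = ∑ j, h (θ i) (θ j) * star (φ j m) :=
          Finset.sum_congr rfl fun j _ => by rw [← hm, h2]
      _ = h (θ i) m := h3.symm
      _ = φ k (θ i) := h1 _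
  have main : ∀ u, ph u = s (π u) := by
    intro u
    funext k
    simp only [hph, hs, hπ]
    rw [hφsum]
    refine Finset.sum_congr rfl fun i _ => ?_
    rw [key, hφlin]
  refine ⟨main, fun u => ?_⟩
  have hπs : ∀ m, π (s m) = m := by
    intro m
    rw [hπ, hs]
    exact hdb₁ m
  rw [main, main, hπs]
end

section
/- Let M be a finitely generated projective left A-module with generators θ¹,…,θᴺ, dual basis φ₁,…,φ_N, and invertible left hermitian form h. Then for every m ∈ M one has ĥ(m) = Σᵢ φⁱ · (φᵢ(m))*, where φⁱ = Σⱼ φⱼ hʲⁱ, and for every f ∈ M* one has ĥ⁻¹(f) = Σᵢ (f(θⁱ))* · θᵢ, where θᵢ = Σⱼ h_{ij} θʲ. -/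
/-- for a f.g. projective module `M` with generators `θⁱ`, dual
basis `φᵢ`, and invertible left hermitian form `h`, one has
`ĥ(m) = Σᵢ φⁱ·(φᵢ(m))*` with `φⁱ = Σⱼ φⱼ hʲⁱ` (i.e. `h(n,m) = Σᵢ (Σⱼ φⱼ(n)hʲⁱ)(φᵢ m)*`),
and `ĥ⁻¹(f) = Σᵢ (f(θⁱ))*·θᵢ` with `θᵢ = Σⱼ h_{ij}θʲ`, for every `f ∈ M*`. -/
theorem stmt13 {A M : Type*} [Ring A] [StarRing A] [Algebra ℂ A]
    [AddCommGroup M] [Module A M] {N : ℕ}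
    (θ : Fin N → M) (φ : Fin N → (M → A))
    (hφadd : ∀ i (m n : M), φ i (m + n) = φ i m + φ i n)
    (hφlin : ∀ i (a : A) (m : M), φ i (a • m) = a * φ i m)
    (hdb₁ : ∀ m : M, ∑ i, φ i m • θ i = m)
    (hdb₂ : ∀ f : M → A, (∀ m n, f (m + n) = f m + f n) → (∀ (a : A) m, f (a • m) = a * f m) →
        ∀ m, ∑ i, φ i m * f (θ i) = f m)
    (h : M → M → A)
    (hadd₁ : ∀ m₁ m₂ n : M, h (m₁ + m₂) n = h m₁ n + h m₂ n)
    (hadd₂ : ∀ m n₁ n₂ : M, h m (n₁ + n₂) = h m n₁ + h m n₂)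
    (hlin : ∀ (a : A) (m n : M), h (a • m) n = a * h m n)
    (hsym : ∀ m n : M, star (h m n) = h n m)
    (hinv : (M → A) → M)
    (hleft : ∀ m : M, hinv (fun n => h n m) = m)
    (hright : ∀ i, (fun n => h n (hinv (φ i))) = φ i) :
    (∀ m n : M, h n m = ∑ i, (∑ j, φ j n * h (θ j) (θ i)) * star (φ i m)) ∧
    (∀ f : M → A, (∀ m n, f (m + n) = f m + f n) → (∀ (a : A) m, f (a • m) = a * f m) →
        ((fun n => h n (hinv f)) = f) →
        hinv f = ∑ i, star (f (θ i)) •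
          ∑ j, h (hinv (φ i)) (hinv (φ j)) • θ j) := by

  have expand : ∀ m x : M, h x m = ∑ i, φ i x * h (θ i) m := fun m x =>
    (hdb₂ (fun y => h y m) (fun a b => hadd₁ a b m) (fun a y => hlin a y m) x).symm
  constructor
  · intro m n
    have h2 : ∀ j, h (θ j) m = ∑ i, h (θ j) (θ i) * star (φ i m) := by
      intro j
      rw [← hsym m (θ j), expand (θ j) m, star_sum]
      exact Finset.sum_congr rfl fun i _ => by rw [star_mul, hsym]
    calc h n m = ∑ j, φ j n * h (θ j) m := expand m n
      _ = ∑ j, ∑ i, φ j n * (h (θ j) (θ i) * star (φ i m)) := by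
          simp_rw [← Finset.mul_sum]
          exact Finset.sum_congr rfl fun j _ => by rw [h2 j]
      _ = ∑ i, (∑ j, φ j n * h (θ j) (θ i)) * star (φ i m) := by
          rw [Finset.sum_comm]
          simp_rw [Finset.sum_mul, mul_assoc]
  · intro f hfa hfl hf
    set m := hinv f with hm
    have hfm : ∀ n, f n = h n m := fun n => (congrFun hf n).symm
    have key : ∀ j, φ j m = ∑ i, h m (θ i) * h (hinv (φ i)) (hinv (φ j)) := by
      intro j
      have e1 : φ j m = h m (hinv (φ j)) := (congrFun (hright j) m).symm
      rw [e1, ← hsym (hinv (φ j)) m, expand m (hinv (φ j)), star_sum]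
      refine Finset.sum_congr rfl fun i _ => ?_
      rw [star_mul, hsym]
      congr 1
      rw [← congrFun (hright i) (hinv (φ j))]
      exact hsym _ _
    calc hinv f = ∑ j, φ j m • θ j := (hdb₁ m).symm
      _ = ∑ j, ∑ i, (h m (θ i) * h (hinv (φ i)) (hinv (φ j))) • θ j := by
          refine Finset.sum_congr rfl fun j _ => ?_
          rw [key j, Finset.sum_smul]
      _ = ∑ i, star (f (θ i)) • ∑ j, h (hinv (φ i)) (hinv (φ j)) • θ j := by
          rw [Finset.sum_comm]
          refine Finset.sum_congr rfl fun i _ => ?_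
          rw [hfm (θ i), Finset.smul_sum]
          exact Finset.sum_congr rfl fun j _ => by rw [hsym, mul_smul]
end

section
/- Let (A, 𝔤, h) be a finitely generated projective hermitian calculus with generators θ¹,…,θᴺ of Ω¹_𝔤, and set θᵢ = Σⱼ h_{ij}θʲ. Then the symmetry form satisfies ρ = Σᵢ θᵢ* θⁱ, i.e., ρ(∂₁, ∂₂) = Σᵢ (θᵢ*(∂₁) θⁱ(∂₂) − θᵢ*(∂₂) θⁱ(∂₁)) for all ∂₁, ∂₂ ∈ 𝔤. -/
/-- for a finitely generated projective hermitian calculus with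
generators `θⁱ` of `Ω¹_𝔤` and `θᵢ = Σⱼ h_{ij}θʲ`, the symmetry form satisfies
`ρ = Σᵢ θᵢ*θⁱ`, i.e.
`ρ(∂₁,∂₂) = Σᵢ (θᵢ*(∂₁)θⁱ(∂₂) − θᵢ*(∂₂)θⁱ(∂₁))`, where `ω*(∂) = ω(∂*)*`.
The derivations `𝔤` are modelled by `G` with `*`-operation `starG`; 1-forms are
maps `G → A`, the module `Ω¹_𝔤` is the set `Ωa`, and `φ(∂)(ω) = ω(∂)`. -/
theorem stmt14 {A G : Type*} [Ring A] [StarRing A] [Algebra ℂ A]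
    (starG : G → G) (hstarG : ∀ δ, starG (starG δ) = δ)
    (Ωa : Set (G → A)) {N : ℕ}
    (θ : Fin N → (G → A)) (hθmem : ∀ i, θ i ∈ Ωa)
    (φd : Fin N → ((G → A) → A))
    (hφadd : ∀ i (ω η : G → A), φd i (ω + η) = φd i ω + φd i η)
    (hφlin : ∀ i (a : A) (ω : G → A), φd i (a • ω) = a * φd i ω)
    (hdb₁ : ∀ ω ∈ Ωa, ∑ i, φd i ω • θ i = ω)
    (h : (G → A) → (G → A) → A)
    (hadd₁ : ∀ ω₁ ω₂ η, h (ω₁ + ω₂) η = h ω₁ η + h ω₂ η)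
    (hadd₂ : ∀ ω η₁ η₂, h ω (η₁ + η₂) = h ω η₁ + h ω η₂)
    (hlin : ∀ (a : A) ω η, h (a • ω) η = a * h ω η)
    (hsym : ∀ ω η, star (h ω η) = h η ω)
    (hinv : ((G → A) → A) → (G → A))
    (hinvmem : ∀ f, hinv f ∈ Ωa)
    (hleft : ∀ ω ∈ Ωa, hinv (fun η => h η ω) = ω)
    (hrightφ : ∀ i, ∀ η ∈ Ωa, h η (hinv (φd i)) = φd i η)
    (hrightev : ∀ (δ : G), ∀ η ∈ Ωa, h η (hinv (fun ω => ω δ)) = η δ)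
    (ρ : G → G → A)
    (hρ : ∀ δ₁ δ₂, ρ δ₁ δ₂ =
        h (hinv (fun ω => ω (starG δ₁))) (hinv (fun ω => ω δ₂)) -
        h (hinv (fun ω => ω (starG δ₂))) (hinv (fun ω => ω δ₁))) :
    ∀ δ₁ δ₂, ρ δ₁ δ₂ =
      ∑ i, (star (∑ j, h (hinv (φd i)) (hinv (φd j)) * θ j (starG δ₁)) * θ i δ₂ -
            star (∑ j, h (hinv (φd i)) (hinv (φd j)) * θ j (starG δ₂)) * θ i δ₁) := by
  have hsum : ∀ (f : Fin N → (G → A)) (η : G → A), h (∑ i, f i) η = ∑ i, h (f i) η := by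
    intro f η
    have h0 : h 0 η = 0 := by
      have := hadd₁ 0 0 η
      simp only [add_zero] at this
      exact (right_eq_add.mp this).symm ▸ rfl
    let F : (G → A) →+ A :=
      { toFun := fun ω => h ω η, map_zero' := h0, map_add' := fun a b => hadd₁ a b η }
    exact map_sum F f Finset.univ
  have key : ∀ δ δ' : G, h (hinv (fun ω => ω (starG δ))) (hinv (fun ω => ω δ')) =
      ∑ i, star (∑ j, h (hinv (φd i)) (hinv (φd j)) * θ j (starG δ)) * θ i δ' := by
    intro δ δ'
    set α := hinv (fun ω => ω (starG δ)) with hαdef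
    have hα : α ∈ Ωa := hinvmem _
    rw [hrightev δ' α hα]
    conv_lhs => rw [← hdb₁ α hα]
    rw [Finset.sum_apply]
    refine Finset.sum_congr rfl fun i _ => ?_
    have hcoef : φd i α = star (∑ j, h (hinv (φd i)) (hinv (φd j)) * θ j (starG δ)) := by
      rw [← hrightφ i α hα, ← hsym]
      congr 1
      conv_lhs => rw [← hdb₁ (hinv (φd i)) (hinvmem _)]
      rw [hsum]
      refine Finset.sum_congr rfl fun j _ => ?_
      rw [hlin, hrightφ j (hinv (φd i)) (hinvmem _), hrightev (starG δ) (θ j) (hθmem j)]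
    show φd i α • θ i δ' = _
    rw [smul_eq_mul, hcoef]
  intro δ₁ δ₂
  rw [hρ, key δ₁ δ₂, key δ₂ δ₁, ← Finset.sum_sub_distrib]
end

section
/- Let A be a unital *-algebra, 𝔤 ⊆ Der(A) a *-closed abelian Lie algebra with hermitian basis ∂₁,…,∂ₙ, and suppose Ω¹_𝔤 is free with basis θ¹,…,θⁿ dual to the ∂ₐ (θⁱ(∂ₐ) = δⁱₐ·1). Let h be an invertible hermitian form with matrix (hⁱʲ) and inverse (h_{ij}). Then the weak symmetry condition dρ = 0 is equivalent to ∂ₐ(h_{bc} − h_{bc}*) + ∂_b(h_{ca} − h_{ca}*) + ∂_c(h_{ab} − h_{ab}*) = 0 for all a, b, c ∈ {1,…,n}. -/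
/-- for an abelian `*`-closed Lie algebra `𝔤` with hermitian basis
`∂₁,…,∂ₙ` and `Ω¹_𝔤` free with dual basis `θⁱ` (`θⁱ(∂ₐ) = δⁱₐ·1`), with metric
matrix `(hⁱʲ)` and inverse `(h_{ij})`, the weak symmetry condition `dρ = 0` —
where `ρ(∂ₐ,∂_b) = Σᵢ(θᵢ*(∂ₐ)θⁱ(∂_b) − θᵢ*(∂_b)θⁱ(∂ₐ))` with `θᵢ(∂_b) = h_{ib}`
and `dρ(∂ₐ,∂_b,∂_c) = ∂ₐρ(∂_b,∂_c) + ∂_bρ(∂_c,∂ₐ) + ∂_cρ(∂ₐ,∂_b)` — is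
equivalent to `∂ₐ(h_{bc} − h_{bc}*) + ∂_b(h_{ca} − h_{ca}*) + ∂_c(h_{ab} − h_{ab}*) = 0`
for all `a, b, c`. -/
theorem stmt15 {A : Type*} [Ring A] [StarRing A] [Algebra ℂ A] {n : ℕ}
    (D : Fin n → A → A)                                       -- the derivations ∂ₐ
    (hDadd : ∀ a (x y : A), D a (x + y) = D a x + D a y)
    (hDleib : ∀ a (x y : A), D a (x * y) = D a x * y + x * D a y)
    (hDstar : ∀ a (x : A), D a (star x) = star (D a x))        -- ∂ₐ hermitian
    (hDcomm : ∀ a b (x : A), D a (D b x) = D b (D a x))        -- 𝔤 abelian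
    (hm hinvm : Fin n → Fin n → A)                             -- hⁱʲ and h_{ij}
    (hherm : ∀ i j, star (hm i j) = hm j i)
    (hinvherm : ∀ i j, star (hinvm i j) = hinvm j i)
    (hinv₁ : ∀ i k, ∑ j, hm i j * hinvm j k = if i = k then 1 else 0)
    (hinv₂ : ∀ i k, ∑ j, hinvm i j * hm j k = if i = k then 1 else 0)
    (ρ : Fin n → Fin n → A)
    (hρ : ∀ a b, ρ a b = ∑ i,
        (star (hinvm i a) * (if i = b then 1 else 0) -
         star (hinvm i b) * (if i = a then 1 else 0))) :
    (∀ a b c, D a (ρ b c) + D b (ρ c a) + D c (ρ a b) = 0) ↔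
    (∀ a b c, D a (hinvm b c - star (hinvm b c)) +
        D b (hinvm c a - star (hinvm c a)) +
        D c (hinvm a b - star (hinvm a b)) = 0) := by
  have key : ∀ a b, ρ a b = hinvm a b - star (hinvm a b) := by
    intro a b
    rw [hρ]
    simp [Finset.sum_sub_distrib, mul_ite, mul_one, mul_zero,
      Finset.sum_ite_eq, hinvherm]
  constructor <;> intro h a b c <;> have := h a b c <;>
    simpa [key] using this
end

section
/- In the setting of the previous statement (free rank-3 module with dual bases, abelian hermitian derivations, metric given by h¹¹ = 1, h²³ = h₀, h³² = h₀*, and ∂₁(h₀⁻¹) = ∂₁((h₀⁻¹)*)), the same connection ∇ is torsion free: (∇_{∂ₐ}θⁱ)(∂_b) = (∇_{∂_b}θⁱ)(∂ₐ) for all a, b, i ∈ {1,2,3}. -/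
/-- in the same setting as Statement 16 (free rank-3 module with
basis `θⁱ` dual to the commuting hermitian derivations `∂ₐ`, metric
`h¹¹ = 1, h²³ = h₀, h³² = h₀*`, weak symmetry `∂₁(h₀⁻¹) = ∂₁((h₀⁻¹)*)`), the
connection `∇_{∂ₐ}θⁱ = Σⱼ Γₐⁱⱼ θʲ` is torsion free: since `θʲ(∂_b) = δʲ_b` and
`dθⁱ = 0`, this reads `(∇_{∂ₐ}θⁱ)(∂_b) = Γₐⁱ_b = Γ_bⁱₐ = (∇_{∂_b}θⁱ)(∂ₐ)`. -/
theorem stmt17 {A : Type*} [Ring A] [StarRing A] [Algebra ℂ A]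
    (D : Fin 3 → A → A)                                       -- the derivations ∂₁,∂₂,∂₃
    (hDadd : ∀ a (x y : A), D a (x + y) = D a x + D a y)
    (hDleib : ∀ a (x y : A), D a (x * y) = D a x * y + x * D a y)
    (hDsmul : ∀ a (c : ℂ) (x : A), D a (c • x) = c • D a x)
    (hDstar : ∀ a (x : A), D a (star x) = star (D a x))        -- ∂ₐ hermitian
    (hDcomm : ∀ a b (x : A), D a (D b x) = D b (D a x))        -- pairwise commuting
    (h0 h0inv : A)
    (hinv₁ : h0 * h0inv = 1) (hinv₂ : h0inv * h0 = 1)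
    (hws : D 0 h0inv = D 0 (star h0inv))                       -- ∂₁(h₀⁻¹) = ∂₁((h₀⁻¹)*)
    (hm : Matrix (Fin 3) (Fin 3) A)
    (hhm : hm = !![1, 0, 0; 0, 0, h0; 0, star h0, 0])          -- the metric (hⁱʲ)
    (Γ : Fin 3 → Matrix (Fin 3) (Fin 3) A)
    (hΓ : Γ = ![
      !![0, 0, 0;
         0, -((2 : ℂ)⁻¹ • (h0 * D 0 h0inv)), 0;
         0, 0, -((2 : ℂ)⁻¹ • (star h0 * D 0 (star h0inv)))],
      !![0, 0, (2 : ℂ)⁻¹ • D 0 h0inv;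
         -((2 : ℂ)⁻¹ • (h0 * D 0 (star h0inv))), -(h0 * D 1 h0inv), 0;
         0, 0, 0],
      !![0, (2 : ℂ)⁻¹ • D 0 h0inv, 0;
         0, 0, 0;
         -((2 : ℂ)⁻¹ • (star h0 * D 0 h0inv)), 0, -(star h0 * D 2 h0inv)]]) :
    ∀ a b i, Γ a i b = Γ b i a := by
  subst hΓ
  intro a b i
  fin_cases a <;> fin_cases b <;> fin_cases i <;>
    simp [Matrix.cons_val_zero, Matrix.cons_val_one, hws]
end
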